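/- Let 0 ≤ α < 1/2 and δ ∈ (0, π/2). Suppose F : ℂ → ℂ satisfies |F(z)| ≤ M|z|^{−2α} for all z ≠ 0 in the sector |arg z| ≤ δ. Then the boundary integral of |F| over each of the two boundary arcs of D_E^δ(t), parametrized as z = t·r·e^{±iδ}/(1 + r·e^{±iδ}) for r ∈ (0,∞), is bounded by M·t^{1−2α}·(1/(1−2α) + 1). -/

import Mathlib

open Complex Real Set intervalIntegral

set_option maxHeartbeats 2000000 in
/-- If `0 ≤ α < 1/2`, `0 < δ < π/2` and `|F(z)| ≤ M |z|^{-2α}` on the sector `|arg z| ≤ δ`,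
then the integral of `|F|` over each boundary arc of the eye-shaped domain `D_E^δ(t)`,
parametrized as `z = t r e^{±iδ}/(1 + r e^{±iδ})` for `r ∈ (0,∞)` (with
`|dz/dr| = |t/(1 + r e^{±iδ})²|`), is bounded by `M t^{1-2α} (1/(1-2α) + 1)`. -/
theorem stmt3 (α δ t M : ℝ) (hα0 : 0 ≤ α) (hα : α < 1 / 2) (hδ0 : 0 < δ) (hδ : δ < π / 2)
    (ht : 0 < t) (F : ℂ → ℂ)
    (hF : ∀ z : ℂ, z ≠ 0 → |Complex.arg z| ≤ δ → ‖F z‖ ≤ M * ‖z‖ ^ (-(2 * α))) :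
    ∀ s : ℝ, s = δ ∨ s = -δ →
      (∫ r in Set.Ioi (0 : ℝ),
          ‖F ((t : ℂ) * (r : ℂ) * Complex.exp ((s : ℂ) * Complex.I) /
              (1 + (r : ℂ) * Complex.exp ((s : ℂ) * Complex.I)))‖ *
            ‖(t : ℂ) / (1 + (r : ℂ) * Complex.exp ((s : ℂ) * Complex.I)) ^ 2‖)
        ≤ M * t ^ (1 - 2 * α) * (1 / (1 - 2 * α) + 1) := by
  intro s hs
  have hM : 0 ≤ M := by
    have h1 := hF 1 one_ne_zero (by simp [Complex.arg_one]; exact hδ0.le)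
    simpa using (norm_nonneg (F 1)).trans h1
  have hcs : Real.cos s = Real.cos δ := by rcases hs with h | h <;> simp [h]
  have hcosδ : 0 < Real.cos δ := Real.cos_pos_of_mem_Ioo ⟨by linarith [Real.pi_pos], hδ⟩
  have hsinδ : 0 ≤ Real.sin δ := Real.sin_nonneg_of_nonneg_of_le_pi hδ0.le
    (by linarith [Real.pi_pos])
  have habs_sin : |Real.sin s| = Real.sin δ := by
    rcases hs with h | h <;> simp [h, abs_of_nonneg, hsinδ]
  set q : ℝ := -(2 * α) with hq
  have hq1 : -1 < q := by rw [hq]; linarith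
  have h2α : (0:ℝ) < 1 - 2 * α := by linarith
  set C : ℝ := M * t ^ (1 - 2 * α) with hC
  have hC0 : 0 ≤ C := mul_nonneg hM (Real.rpow_nonneg ht.le _)
  set g : ℝ → ℝ := fun r => C * (if r ≤ 1 then r ^ q else r ^ (-2 : ℝ)) with hg
  -- Pointwise facts for each r > 0
  have key : ∀ r : ℝ, r ∈ Set.Ioi (0:ℝ) →
      ‖F ((t : ℂ) * (r : ℂ) * Complex.exp ((s : ℂ) * Complex.I) /
          (1 + (r : ℂ) * Complex.exp ((s : ℂ) * Complex.I)))‖ *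
        ‖(t : ℂ) / (1 + (r : ℂ) * Complex.exp ((s : ℂ) * Complex.I)) ^ 2‖ ≤ g r := by
    intro r hr
    rw [Set.mem_Ioi] at hr
    set e : ℂ := Complex.exp ((s : ℂ) * Complex.I) with he
    set w : ℂ := 1 + (r : ℂ) * e with hw
    have hwre : w.re = 1 + r * Real.cos s := by
      simp [hw, he, Complex.exp_mul_I, ← Complex.ofReal_cos, ← Complex.ofReal_sin]
    have hwim : w.im = r * Real.sin s := by
      simp [hw, he, Complex.exp_mul_I, ← Complex.ofReal_cos, ← Complex.ofReal_sin]
    have hnsq : Complex.normSq w = 1 + 2 * r * Real.cos s + r ^ 2 := by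
      rw [Complex.normSq_apply, hwre, hwim]
      nlinarith [Real.sin_sq_add_cos_sq s]
    have hcs0 : 0 < Real.cos s := hcs ▸ hcosδ
    have hnsq1 : 1 ≤ Complex.normSq w := by nlinarith
    have hnsqr : r ^ 2 ≤ Complex.normSq w := by nlinarith
    set A : ℝ := ‖w‖ with hA
    have hAsq : A ^ 2 = Complex.normSq w := by
      rw [hA, ← Complex.sq_norm]
    have hA1 : 1 ≤ A := by nlinarith [norm_nonneg w]
    have hAr : r ≤ A := by nlinarith [norm_nonneg w]
    have hA0 : 0 < A := lt_of_lt_of_le one_pos hA1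
    have hw0 : w ≠ 0 := norm_pos_iff.mp hA0
    set z : ℂ := (t : ℂ) * (r : ℂ) * e / w with hz
    have hz0 : z ≠ 0 := by
      apply div_ne_zero _ hw0
      exact mul_ne_zero (mul_ne_zero (by exact_mod_cast ht.ne') (by exact_mod_cast hr.ne'))
        (Complex.exp_ne_zero _)
    have he1 : ‖e‖ = 1 := by
      rw [he]; exact Complex.norm_exp_ofReal_mul_I s
    have hzn : ‖z‖ = t * r / A := by
      rw [hz, norm_div, norm_mul, norm_mul]
      simp [he1, Complex.norm_real, Real.norm_eq_abs, abs_of_pos ht, abs_of_pos hr, hA]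
    -- the argument bound
    have hconj : (starRingEnd ℂ) e = Complex.exp (-((s:ℂ) * Complex.I)) := by
      rw [he, ← Complex.exp_conj]; simp
    have hee : e * Complex.exp (-((s:ℂ) * Complex.I)) = 1 := by
      rw [he, ← Complex.exp_add]; simp
    have heconj : e * (starRingEnd ℂ) w = (r : ℂ) + e := by
      rw [hw]
      simp only [map_add, map_one, map_mul, Complex.conj_ofReal, hconj]
      calc e * (1 + (r:ℂ) * Complex.exp (-((s:ℂ) * Complex.I)))
          = e + (r:ℂ) * (e * Complex.exp (-((s:ℂ) * Complex.I))) := by ring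
        _ = (r:ℂ) + e := by rw [hee, mul_one, add_comm]
    have hzeq : z = ((t * r / Complex.normSq w : ℝ) : ℂ) * ((r : ℂ) + e) := by
      rw [hz, div_eq_mul_inv, Complex.inv_def, ← heconj]
      push_cast
      have : (Complex.normSq w : ℂ) ≠ 0 := by
        exact_mod_cast (by positivity : (0:ℝ) < Complex.normSq w).ne'
      field_simp
    have harg : |Complex.arg z| ≤ δ := by
      have hpos : (0:ℝ) < t * r / Complex.normSq w := by positivity
      rw [hzeq, Complex.arg_real_mul _ hpos]
      have hre : (0:ℝ) ≤ ((r : ℂ) + e).re := by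
        have : ((r : ℂ) + e).re = r + Real.cos s := by
          simp [he, Complex.exp_mul_I, ← Complex.ofReal_cos, ← Complex.ofReal_sin]
        rw [this]; positivity
      rw [Complex.arg_of_re_nonneg hre]
      have him : ((r : ℂ) + e).im = Real.sin s := by
        simp [he, Complex.exp_mul_I, ← Complex.ofReal_cos, ← Complex.ofReal_sin]
      have hre' : ((r : ℂ) + e).re = r + Real.cos s := by
        simp [he, Complex.exp_mul_I, ← Complex.ofReal_cos, ← Complex.ofReal_sin]
      set B : ℝ := ‖(r : ℂ) + e‖ with hB
      have hB1 : 1 ≤ B := by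
        have hBsq : B ^ 2 = (r + Real.cos s) ^ 2 + Real.sin s ^ 2 := by
          rw [hB, Complex.sq_norm, Complex.normSq_apply, hre', him]; ring
        nlinarith [norm_nonneg ((r:ℂ) + e), Real.sin_sq_add_cos_sq s]
      have hB0 : 0 < B := lt_of_lt_of_le one_pos hB1
      rw [him]
      have habs : |Real.arcsin (Real.sin s / B)| = Real.arcsin (Real.sin δ / B) := by
        rcases hs with h | h
        · rw [h, _root_.abs_of_nonneg (Real.arcsin_nonneg.2 (by positivity))]
        · rw [h, Real.sin_neg, neg_div, Real.arcsin_neg, abs_neg,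
            _root_.abs_of_nonneg (Real.arcsin_nonneg.2 (by positivity))]
      rw [habs]
      calc Real.arcsin (Real.sin δ / B) ≤ Real.arcsin (Real.sin δ) := by
            apply Real.monotone_arcsin
            rw [div_le_iff₀ hB0]
            nlinarith
        _ = δ := Real.arcsin_sin (by linarith [Real.pi_pos]) (by linarith)
    -- norm bound
    have hFz := hF z hz0 harg
    have hden : ‖(t : ℂ) / w ^ 2‖ = t / A ^ 2 := by
      rw [norm_div, norm_pow]
      simp only [Complex.norm_real, Real.norm_eq_abs, abs_of_pos ht]
      rw [hA]
    have hzq : ‖z‖ ^ q = (t * r) ^ q * A ^ (-q) := by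
      rw [hzn, Real.div_rpow (by positivity) hA0.le, Real.rpow_neg hA0.le, div_eq_mul_inv,
        inv_inv]
      congr 1
      rw [hq]; ring
    have step1 : ‖F z‖ * ‖(t : ℂ) / w ^ 2‖ ≤ M * ‖z‖ ^ q * (t / A ^ 2) := by
      rw [hden]
      exact mul_le_mul_of_nonneg_right hFz (by positivity)
    have hA2 : (A : ℝ) ^ (2:ℕ) = A ^ ((2:ℝ)) := by
      rw [← Real.rpow_natCast A 2]; norm_num
    have step2 : M * ‖z‖ ^ q * (t / A ^ 2) = C * (r ^ q * A ^ (q + 1 - (1 - 2*α) + 2*α - 2)) := by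
      rw [hzq, Real.mul_rpow ht.le hr.le, hC]
      have e1 : t ^ q * t = t ^ (1 - 2*α) := by
        rw [show (1 - 2*α) = q + 1 by rw [hq]; ring, Real.rpow_add_one ht.ne']
      have e2 : A ^ (-q) * (A ^ ((2:ℝ)))⁻¹ = A ^ (q + 1 - (1 - 2*α) + 2*α - 2) := by
        rw [← Real.rpow_neg hA0.le, ← Real.rpow_add hA0]
        congr 1; rw [hq]; ring
      rw [hA2, ← e1, ← e2]
      field_simp
    have hexp : q + 1 - (1 - 2*α) + 2*α - 2 = 2*α - 2 := by rw [hq]; ring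
    rw [step2, hexp] at step1
    refine le_trans step1 ?_
    simp only [hg]
    by_cases hr1 : r ≤ 1
    · rw [if_pos hr1]
      apply mul_le_mul_of_nonneg_left _ hC0
      have : A ^ (2*α - 2) ≤ 1 := Real.rpow_le_one_of_one_le_of_nonpos hA1 (by linarith)
      calc r ^ q * A ^ (2*α-2) ≤ r ^ q * 1 :=
            mul_le_mul_of_nonneg_left this (Real.rpow_nonneg hr.le q)
        _ = r ^ q := mul_one _
    · rw [if_neg hr1]
      push_neg at hr1
      apply mul_le_mul_of_nonneg_left _ hC0
      have h1 : A ^ (2*α - 2) ≤ r ^ (2*α - 2) :=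
        Real.rpow_le_rpow_of_nonpos hr hAr (by linarith)
      calc r ^ q * A ^ (2*α-2) ≤ r ^ q * r ^ (2*α-2) :=
            mul_le_mul_of_nonneg_left h1 (Real.rpow_nonneg hr.le q)
        _ = r ^ (-2:ℝ) := by
            rw [← Real.rpow_add hr]; congr 1; rw [hq]; ring
  -- integrability of g
  have hint1 : MeasureTheory.IntegrableOn g (Set.Ioc (0:ℝ) 1) := by
    apply MeasureTheory.IntegrableOn.congr_fun (f := fun r => C * r ^ q)
    · exact ((intervalIntegrable_rpow' hq1).const_mul C).1
    · intro x hx; simp [hg, hx.2]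
    · exact measurableSet_Ioc
  have hint2 : MeasureTheory.IntegrableOn g (Set.Ioi (1:ℝ)) := by
    apply MeasureTheory.IntegrableOn.congr_fun (f := fun r => C * r ^ (-2:ℝ))
    · exact (integrableOn_Ioi_rpow_of_lt (by norm_num) one_pos).const_mul C
    · intro x hx; rw [Set.mem_Ioi] at hx; simp [hg, not_le.2 hx]
    · exact measurableSet_Ioi
  have hsplit : Set.Ioc (0:ℝ) 1 ∪ Set.Ioi (1:ℝ) = Set.Ioi (0:ℝ) :=
    Set.Ioc_union_Ioi_eq_Ioi zero_le_one
  have hgint : MeasureTheory.IntegrableOn g (Set.Ioi (0:ℝ)) := by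
    rw [← hsplit]; exact hint1.union hint2
  -- compare
  have hmono : (∫ r in Set.Ioi (0 : ℝ),
          ‖F ((t : ℂ) * (r : ℂ) * Complex.exp ((s : ℂ) * Complex.I) /
              (1 + (r : ℂ) * Complex.exp ((s : ℂ) * Complex.I)))‖ *
            ‖(t : ℂ) / (1 + (r : ℂ) * Complex.exp ((s : ℂ) * Complex.I)) ^ 2‖)
        ≤ ∫ r in Set.Ioi (0:ℝ), g r := by
    apply MeasureTheory.integral_mono_of_nonneg
    · filter_upwards with r using by positivity
    · exact hgint
    · filter_upwards [MeasureTheory.ae_restrict_mem measurableSet_Ioi] with r hr using key r hr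
  refine hmono.trans ?_
  -- compute the integral of g
  have hval1 : ∫ r in Set.Ioc (0:ℝ) 1, g r = C * (1 / (1 - 2*α)) := by
    rw [MeasureTheory.setIntegral_congr_fun measurableSet_Ioc
      (g := fun r => C * r ^ q) (by intro x hx; simp [hg, hx.2])]
    rw [MeasureTheory.integral_const_mul]
    congr 1
    rw [← integral_of_le zero_le_one, integral_rpow (Or.inl hq1)]
    rw [Real.one_rpow, Real.zero_rpow (by rw [hq]; intro h; linarith [h]; )]
    rw [hq]; ring_nf
  have hval2 : ∫ r in Set.Ioi (1:ℝ), g r = C * 1 := by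
    rw [MeasureTheory.setIntegral_congr_fun measurableSet_Ioi
      (g := fun r => C * r ^ (-2:ℝ)) (by intro x hx; rw [Set.mem_Ioi] at hx; simp [hg, not_le.2 hx])]
    rw [MeasureTheory.integral_const_mul, integral_Ioi_rpow_of_lt (by norm_num) one_pos]
    norm_num
  have : ∫ r in Set.Ioi (0:ℝ), g r = C * (1 / (1 - 2*α)) + C * 1 := by
    rw [← hsplit, MeasureTheory.setIntegral_union (Set.Ioc_disjoint_Ioi le_rfl)
      measurableSet_Ioi hint1 hint2, hval1, hval2]
  rw [this, hC]; ring_nf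
  exact le_refl _
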